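/- For all non-negative integers x and m, G(x, 0, m) = 1 and G(0, x, m) = 1. -/

import Mathlib

open MeasureTheory Filter

/-- `Ib n m = Σ_{z=0}^{n} ((1 + (-1)^{n-z}) / 2^m) · m!/(z!(m-z)!)`, empty sum for `n < 0`. -/
noncomputable def Ib (n : ℤ) (m : ℕ) : ℝ :=
  ∑ z ∈ Finset.range (n + 1).toNat,
    ((1 + (-1 : ℝ) ^ (n.toNat - z)) / 2 ^ m) * (m.choose z)

/-- The function `G(x, y, m)` of the paper. -/
noncomputable def Gfun (x y m : ℕ) : ℝ :=
  if x = 0 ∧ y = 0 then 1 else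
    ∑ n ∈ Finset.range (m / (2 * (x + y)) + 1),
      (2 * Ib (((m : ℤ) - x) / 2 - ((x : ℤ) + y) * n) (2 * (((m : ℤ) - x) / 2) + x + 2).toNat
       - 2 * Ib (((m : ℤ) - x) / 2 - y - ((x : ℤ) + y) * n) (2 * (((m : ℤ) - x) / 2) + x + 2).toNat
       + 2 * Ib (((m : ℤ) - y) / 2 - ((x : ℤ) + y) * n) (2 * (((m : ℤ) - y) / 2) + y + 2).toNat
       - 2 * Ib (((m : ℤ) - y) / 2 - x - ((x : ℤ) + y) * n) (2 * (((m : ℤ) - y) / 2) + y + 2).toNat)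

/-- The piecewise-linear interpolation `H_{n,m}(t)` of the paper. -/
noncomputable def Hfun (n m : ℕ) (t : ℝ) : ℝ :=
  if (n : ℝ) ≤ |t| then 1 else
    (1 - ((n : ℝ) + t) / 2 + (⌊((n : ℝ) + t) / 2⌋ : ℤ))
        * Gfun (⌊((n : ℝ) + t) / 2⌋).toNat (n - (⌊((n : ℝ) + t) / 2⌋).toNat) m
    + (((n : ℝ) + t) / 2 - (⌊((n : ℝ) + t) / 2⌋ : ℤ))
        * Gfun ((⌊((n : ℝ) + t) / 2⌋).toNat + 1) (n - (⌊((n : ℝ) + t) / 2⌋).toNat - 1) m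

lemma Ib_neg {n : ℤ} (m : ℕ) (h : n < 0) : Ib n m = 0 := by
  unfold Ib
  have : (n+1).toNat = 0 := by omega
  simp [this]

lemma alt_sum (n k : ℕ) :
    ∑ z ∈ Finset.range (k+1), (-1:ℝ)^(k-z) * ((n+1).choose z) = n.choose k := by
  induction k with
  | zero => simp
  | succ k ih =>
    rw [Finset.sum_range_succ]
    have h1 : ∀ z ∈ Finset.range (k+1),
        (-1:ℝ)^(k+1-z) * ((n+1).choose z) = -((-1:ℝ)^(k-z) * ((n+1).choose z)) := by
      intro z hz
      simp only [Finset.mem_range] at hz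
      have hz' : k+1-z = (k-z)+1 := by omega
      rw [hz', pow_succ]; ring
    rw [Finset.sum_congr rfl h1, Finset.sum_neg_distrib, ih]
    have : (n+1).choose (k+1) = n.choose k + n.choose (k+1) := Nat.choose_succ_succ n k
    rw [this]
    push_cast
    simp [Nat.sub_self]

lemma halfsum (b : ℕ) :
    ∑ z ∈ Finset.range (b+1), (2*b+2).choose z + (2*b+1).choose b = 2^(2*b+1) := by
  have h1 : ∑ z ∈ Finset.range (b+1), (2*b+2).choose z
      = (∑ j ∈ Finset.range b, (2*b+2).choose (j+1)) + 1 := by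
    rw [Finset.sum_range_succ']
    simp
  have h2 : ∀ j, (2*b+2).choose (j+1) = (2*b+1).choose j + (2*b+1).choose (j+1) := by
    intro j
    have : 2*b+2 = (2*b+1)+1 := by ring
    rw [this, Nat.choose_succ_succ]
  have h3 : ∑ j ∈ Finset.range b, (2*b+2).choose (j+1)
      = (∑ j ∈ Finset.range b, (2*b+1).choose j) + ∑ j ∈ Finset.range b, (2*b+1).choose (j+1) := by
    rw [← Finset.sum_add_distrib]
    exact Finset.sum_congr rfl fun j _ => h2 j
  have h4 : ∑ i ∈ Finset.range (b+1), (2*b+1).choose i = 4^b :=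
    Nat.sum_range_choose_halfway b
  have h5 : (∑ j ∈ Finset.range b, (2*b+1).choose j) + (2*b+1).choose b = 4^b := by
    rw [← Finset.sum_range_succ]; exact h4
  have h6 : (∑ j ∈ Finset.range b, (2*b+1).choose (j+1)) + 1 = 4^b := by
    rw [← h4, Finset.sum_range_succ']
    simp
  have h7 : (2:ℕ)^(2*b+1) = 4^b + 4^b := by
    rw [pow_succ, pow_mul]; ring
  omega

lemma Ib_half (b : ℕ) : Ib (b:ℤ) (2*b+2) = 1/2 := by
  unfold Ib
  have h1 : ((b:ℤ)+1).toNat = b+1 := by omega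
  have h2 : (b:ℤ).toNat = b := by omega
  rw [h1]
  simp only [h2]
  have hs : ∑ z ∈ Finset.range (b+1), ((1 + (-1:ℝ)^(b - z)) / 2^(2*b+2)) * ((2*b+2).choose z)
      = ((∑ z ∈ Finset.range (b+1), ((2*b+2).choose z : ℝ))
         + ∑ z ∈ Finset.range (b+1), (-1:ℝ)^(b-z) * ((2*b+2).choose z)) / 2^(2*b+2) := by
    rw [← Finset.sum_add_distrib, Finset.sum_div]
    apply Finset.sum_congr rfl
    intro z _
    ring
  rw [hs]
  have ha : ∑ z ∈ Finset.range (b+1), (-1:ℝ)^(b-z) * ((2*b+2).choose z)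
      = ((2*b+1).choose b : ℝ) := by
    have := alt_sum (2*b+1) b
    have he : 2*b+1+1 = 2*b+2 := by ring
    rw [he] at this
    exact this
  have hh : (∑ z ∈ Finset.range (b+1), ((2*b+2).choose z : ℝ))
      = 2^(2*b+1) - ((2*b+1).choose b : ℝ) := by
    have := halfsum b
    have := congrArg (fun n : ℕ => (n : ℝ)) this
    push_cast at this
    linarith
  rw [ha, hh]
  rw [show (2:ℝ)^(2*b+2) = 2^(2*b+1) * 2 by rw [pow_succ]]
  have : (0:ℝ) < 2^(2*b+1) := by positivity
  field_simp
  ring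

lemma tele (x m : ℕ) (hx : x ≠ 0) :
    ∑ n ∈ Finset.range (m/(2*x) + 1),
      (2 * Ib ((m:ℤ)/2 - (x:ℤ)*(n:ℤ)) (2*((m:ℤ)/2) + 2).toNat
       - 2 * Ib ((m:ℤ)/2 - (x:ℤ) - (x:ℤ)*(n:ℤ)) (2*((m:ℤ)/2) + 2).toNat) = 1 := by
  have hb : (m:ℤ)/2 = ((m/2 : ℕ) : ℤ) := (Int.natCast_div m 2).symm
  have hM : (2*((m:ℤ)/2) + 2).toNat = 2*(m/2) + 2 := by rw [hb]; omega
  set b := m / 2 with hbdef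
  have hsum : ∀ n ∈ Finset.range (m/(2*x)+1),
      2 * Ib ((m:ℤ)/2 - (x:ℤ)*(n:ℤ)) (2*((m:ℤ)/2) + 2).toNat
       - 2 * Ib ((m:ℤ)/2 - (x:ℤ) - (x:ℤ)*(n:ℤ)) (2*((m:ℤ)/2) + 2).toNat
      = (fun k : ℕ => 2 * Ib ((b:ℤ) - (x:ℤ)*(k:ℤ)) (2*b+2)) n
        - (fun k : ℕ => 2 * Ib ((b:ℤ) - (x:ℤ)*(k:ℤ)) (2*b+2)) (n+1) := by
    intro n _
    simp only
    rw [hM, hb]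
    have harg : (b:ℤ) - (x:ℤ) - (x:ℤ)*(n:ℤ) = (b:ℤ) - (x:ℤ)*((n+1:ℕ):ℤ) := by
      push_cast; ring
    rw [harg]
  rw [Finset.sum_congr rfl hsum, Finset.sum_range_sub']
  have hneg : (b:ℤ) - (x:ℤ)*(((m/(2*x)+1 : ℕ)):ℤ) < 0 := by
    have h1 := Nat.div_add_mod m (2*x)
    have h2 : m % (2*x) < 2*x := Nat.mod_lt m (by omega)
    have h3 : (m:ℤ) < 2*((x:ℤ)*(((m/(2*x)+1:ℕ)):ℤ)) := by
      have h1' : (2*(x:ℤ))*((m/(2*x):ℕ):ℤ) + ((m % (2*x):ℕ):ℤ) = m := by exact_mod_cast h1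
      have h2' : ((m % (2*x):ℕ):ℤ) < 2*x := by exact_mod_cast h2
      push_cast
      push_cast at h1' h2'
      nlinarith [h1', h2']
    have h4 : 2*(b:ℤ) ≤ m := by omega
    linarith
  rw [Ib_neg _ hneg]
  norm_num [Ib_half]

theorem G_boundary_one (x m : ℕ) : Gfun x 0 m = 1 ∧ Gfun 0 x m = 1 := by
  by_cases hx : x = 0
  · subst hx
    constructor <;> (unfold Gfun; simp)
  constructor
  · unfold Gfun
    rw [if_neg (by simp [hx])]
    rw [← tele x m hx]
    apply Finset.sum_congr (by norm_num)
    intro n _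
    simp only [Nat.cast_zero, add_zero, sub_zero]
    ring
  · unfold Gfun
    rw [if_neg (by simp [hx])]
    rw [← tele x m hx]
    apply Finset.sum_congr (by norm_num)
    intro n _
    simp only [Nat.cast_zero, add_zero, zero_add, sub_zero]
    ring
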